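/- arXiv:1909.04587 — 4 statements merged into one kernel-verified Lean document; each statement's English description precedes it below -/
import Mathlib

section
/- Let m₁, m₂, χ₁, χ₂, C > 0 and χ₃ ∈ ℝ satisfy 4m₁m₂χ₁χ₂C⁸ < √(1 − 4m₂χ₃C⁴). Then there exist a, b, c > 0 such that m₁(χ₁²/b + c)C⁴ < 1 and m₂((aχ₃ + b)²/b + a²χ₂²/c)C⁴ < a. -/
set_option maxHeartbeats 1000000

/-- Core algebraic claim in the proof of Lemma 3.3: under the smallness condition (3.11)
`4m₁m₂χ₁χ₂C⁸ < √(1 − 4m₂χ₃C⁴)`, there exist `a, b, c > 0` making both coefficients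
`A = 1 − m₁(χ₁²/b + c)C⁴` and `B = a − m₂((aχ₃+b)²/b + a²χ₂²/c)C⁴` positive. -/
theorem stmt3 (m₁ m₂ χ₁ χ₂ C χ₃ : ℝ)
    (hm₁ : 0 < m₁) (hm₂ : 0 < m₂) (hχ₁ : 0 < χ₁) (hχ₂ : 0 < χ₂) (hC : 0 < C)
    (hsmall : 4 * m₁ * m₂ * χ₁ * χ₂ * C ^ 8 < Real.sqrt (1 - 4 * m₂ * χ₃ * C ^ 4)) :
    ∃ a b c : ℝ, 0 < a ∧ 0 < b ∧ 0 < c ∧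
      m₁ * (χ₁ ^ 2 / b + c) * C ^ 4 < 1 ∧
      m₂ * ((a * χ₃ + b) ^ 2 / b + a ^ 2 * χ₂ ^ 2 / c) * C ^ 4 < a := by
  set K := C ^ 4 with hKdef
  have hK : 0 < K := by positivity
  set S2 := 1 - 4 * m₂ * χ₃ * K with hS2def
  set L := 4 * m₁ * m₂ * χ₁ * χ₂ * K ^ 2 with hLdef
  have hL : 0 < L := by positivity
  have hsmall' : L < Real.sqrt S2 := by
    have : L = 4 * m₁ * m₂ * χ₁ * χ₂ * C ^ 8 := by rw [hLdef, hKdef]; ring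
    rw [this]; exact hsmall
  have hS2 : 0 < S2 := Real.sqrt_pos.mp (hL.trans hsmall')
  have hL2 : L ^ 2 < S2 := (Real.lt_sqrt hL.le).mp hsmall'
  set M := (L ^ 2 + S2) / (8 * m₂ * K) with hMdef
  have hM : 0 < M := by rw [hMdef]; positivity
  have hMKey : 4 * m₂ * K * M = (L ^ 2 + S2) / 2 := by
    rw [hMdef]; field_simp; ring
  set t := Real.sqrt ((m₂ * K * χ₃ ^ 2 + M) / (m₂ * K)) with htdef
  have ht : 0 < t := Real.sqrt_pos.mpr (by positivity)
  have ht2 : m₂ * K * t ^ 2 = m₂ * K * χ₃ ^ 2 + M := by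
    rw [htdef, Real.sq_sqrt (by positivity)]
    field_simp
  set r := Real.sqrt (m₂ * K * χ₂ ^ 2 / M) with hrdef
  have hr : 0 < r := Real.sqrt_pos.mpr (by positivity)
  have hr2 : M * r ^ 2 = m₂ * K * χ₂ ^ 2 := by
    rw [hrdef, Real.sq_sqrt (by positivity)]
    field_simp
  -- key inequality 1
  have e1 : (2 * m₁ * χ₁ * K * r) ^ 2 * (4 * m₂ * K * M) = L ^ 2 := by
    linear_combination (16 * m₁ ^ 2 * χ₁ ^ 2 * m₂ * K ^ 3) * hr2
  have h1 : 2 * m₁ * χ₁ * K * r < 1 := by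
    have hx : 0 < 2 * m₁ * χ₁ * K * r := by positivity
    nlinarith [e1, hMKey, hL2, hS2, sq_nonneg (2 * m₁ * χ₁ * K * r - 1)]
  -- key inequality 2
  have e2 : (2 * m₂ * K * t) ^ 2 = 4 * m₂ ^ 2 * K ^ 2 * χ₃ ^ 2 + (L ^ 2 + S2) / 2 := by
    linear_combination 4 * m₂ * K * ht2 + hMKey
  have e3 : (1 - 2 * m₂ * χ₃ * K) ^ 2 = S2 + 4 * m₂ ^ 2 * K ^ 2 * χ₃ ^ 2 := by
    rw [hS2def]; ring
  have hy : 0 < 1 - 2 * m₂ * χ₃ * K := by nlinarith [hS2]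
  have h2 : 2 * m₂ * K * t < 1 - 2 * m₂ * χ₃ * K := by
    have hxy2 : (2 * m₂ * K * t) ^ 2 < (1 - 2 * m₂ * χ₃ * K) ^ 2 := by
      rw [e2, e3]; linarith
    exact lt_of_pow_lt_pow_left₀ 2 hy.le hxy2
  clear_value t r M L S2 K
  have ha : 0 < χ₁ / (t * r) := div_pos hχ₁ (mul_pos ht hr)
  refine ⟨χ₁ / (t * r), χ₁ / (t * r) * t, χ₁ / (t * r) * t * r ^ 2,
    ha, mul_pos ha ht, mul_pos (mul_pos ha ht) (pow_pos hr 2), ?_, ?_⟩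
  · have eb : χ₁ ^ 2 / (χ₁ / (t * r) * t) = χ₁ * r := by
      rw [div_mul_eq_mul_div, div_div_eq_mul_div, div_eq_iff (by positivity)]
      ring
    have ec : χ₁ / (t * r) * t * r ^ 2 = χ₁ * r := by
      rw [div_mul_eq_mul_div, div_mul_eq_mul_div, eq_comm, eq_div_iff (by positivity)]
      ring
    rw [eb, ec]
    have : m₁ * (χ₁ * r + χ₁ * r) * K = 2 * m₁ * χ₁ * K * r := by ring
    rw [this]; exact h1
  · have E : m₂ * ((χ₁ / (t * r) * χ₃ + χ₁ / (t * r) * t) ^ 2 / (χ₁ / (t * r) * t)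
        + (χ₁ / (t * r)) ^ 2 * χ₂ ^ 2 / (χ₁ / (t * r) * t * r ^ 2)) * K
        = χ₁ / (t * r) * (2 * m₂ * K * t + 2 * m₂ * χ₃ * K) := by
      field_simp
      have hmk : m₂ * K * (r ^ 2 * χ₃ ^ 2 - r ^ 2 * t ^ 2 + χ₂ ^ 2) = 0 := by
        linear_combination (-(r ^ 2)) * ht2 - hr2
      have key := (mul_eq_zero.mp hmk).resolve_left (by positivity)
      linear_combination key
    rw [E]
    have hXlt : 2 * m₂ * K * t + 2 * m₂ * χ₃ * K < 1 := by linarith [h2]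
    calc χ₁ / (t * r) * (2 * m₂ * K * t + 2 * m₂ * χ₃ * K)
        < χ₁ / (t * r) * 1 := by
          apply mul_lt_mul_of_pos_left hXlt ha
      _ = χ₁ / (t * r) := mul_one _
end

section
/- Let k, η₁, η₂ > 0 and χ ∈ ℝ satisfy k²η₁η₂ + kη₁χ⁺ < 4, where χ⁺ = max{χ, 0}. Then there exist ε₁, ε₂, ε₃ > 0 such that (ε₁ + ε₂ + ε₃)k < 4η₂/η₁ and (η₂²/ε₁ + η₂²/(4ε₂) + η₂²/(4ε₃) + η₁χ⁺)k < 4. -/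
/-- Algebraic core (4.15)–(4.17) of Lemma 4.1: under `k²η₁η₂ + kη₁χ⁺ < 4` there exist
`ε₁, ε₂, ε₃ > 0` such that `(ε₁ + ε₂ + ε₃)k < 4η₂/η₁` and
`(η₂²/ε₁ + η₂²/(4ε₂) + η₂²/(4ε₃) + η₁χ⁺)k < 4`. -/
theorem stmt4 (k η₁ η₂ χ : ℝ)
    (hk : 0 < k) (hη₁ : 0 < η₁) (hη₂ : 0 < η₂)
    (hsmall : k ^ 2 * η₁ * η₂ + k * η₁ * max χ 0 < 4) :
    ∃ ε₁ ε₂ ε₃ : ℝ, 0 < ε₁ ∧ 0 < ε₂ ∧ 0 < ε₃ ∧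
      (ε₁ + ε₂ + ε₃) * k < 4 * η₂ / η₁ ∧
      (η₂ ^ 2 / ε₁ + η₂ ^ 2 / (4 * ε₂) + η₂ ^ 2 / (4 * ε₃) + η₁ * max χ 0) * k < 4 := by
  set c := max χ 0 with hc
  have hc0 : 0 ≤ c := le_max_right _ _
  have hD : 0 < 4 - k * η₁ * c := by
    nlinarith [mul_pos (mul_pos (pow_pos hk 2) hη₁) hη₂]
  set D := 4 - k * η₁ * c with hDdef
  have hlt : 2 * η₂ * k / D < 2 / (k * η₁) := by
    rw [div_lt_div_iff₀ hD (by positivity)]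
    nlinarith
  set a := (2 * η₂ * k / D + 2 / (k * η₁)) / 2 with ha
  have ha1 : 2 * η₂ * k / D < a := by rw [ha]; linarith
  have ha2 : a < 2 / (k * η₁) := by rw [ha]; linarith
  have ha0 : 0 < a := lt_trans (by positivity) ha1
  refine ⟨a * η₂, a * η₂ / 2, a * η₂ / 2, by positivity, by positivity, by positivity, ?_, ?_⟩
  · rw [lt_div_iff₀ hη₁]
    have h2 : a * (k * η₁) < 2 := (lt_div_iff₀ (by positivity)).mp ha2
    nlinarith
  · have h1 : 2 * η₂ * k < a * D := (div_lt_iff₀ hD).mp ha1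
    have key : η₂ ^ 2 / (a * η₂) + η₂ ^ 2 / (4 * (a * η₂ / 2)) + η₂ ^ 2 / (4 * (a * η₂ / 2))
        = 2 * η₂ / a := by
      field_simp
      ring
    rw [key]
    have h3 : 2 * η₂ / a * a = 2 * η₂ := by field_simp
    nlinarith [mul_pos ha0 hk, div_pos (by positivity : (0:ℝ) < 2 * η₂) ha0]
end

section
/- Let k, η₁, η₂ > 0 and χ ∈ ℝ satisfy (2 − √22)/3 < kη₁χ < √2 and k²η₁η₂ < (2√2/3)·min{1, 3/2 + kη₁χ}. Let χ⁻ = max{−χ, 0} and α = (1/2)(max{χ²/2, η₂/(√2·η₁)} + (3 − 2kη₁χ⁻)/(3k²η₁²)). Then max{χ²/2, η₂/(√2·η₁)} < α, α < (3 + 2kη₁χ)/(3k²η₁²), α < 1/(k²η₁²), and η₁²α² − 3k²η₁²η₂²α + 2η₂² > 0. -/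
set_option maxHeartbeats 1000000 in
/-- Verification (4.34) in the proof of Lemma 4.3: under the smallness conditions (4.32),
the explicit choice (4.33) of `α` satisfies
`max{χ²/2, η₂/(√2η₁)} < α < min{(3 + 2kη₁χ)/(3k²η₁²), 1/(k²η₁²)}` and
`η₁²α² − 3k²η₁²η₂²α + 2η₂² > 0`. -/
theorem stmt5 (k η₁ η₂ χ χm α : ℝ)
    (hk : 0 < k) (hη₁ : 0 < η₁) (hη₂ : 0 < η₂)
    (hlow : (2 - Real.sqrt 22) / 3 < k * η₁ * χ)
    (hup : k * η₁ * χ < Real.sqrt 2)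
    (hsmall : k ^ 2 * η₁ * η₂ < (2 * Real.sqrt 2 / 3) * min 1 (3 / 2 + k * η₁ * χ))
    (hχm : χm = max (-χ) 0)
    (hα : α = (1 / 2) * (max (χ ^ 2 / 2) (η₂ / (Real.sqrt 2 * η₁))
      + (3 - 2 * k * η₁ * χm) / (3 * k ^ 2 * η₁ ^ 2))) :
    max (χ ^ 2 / 2) (η₂ / (Real.sqrt 2 * η₁)) < α ∧
      α < (3 + 2 * k * η₁ * χ) / (3 * k ^ 2 * η₁ ^ 2) ∧
      α < 1 / (k ^ 2 * η₁ ^ 2) ∧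
      0 < η₁ ^ 2 * α ^ 2 - 3 * k ^ 2 * η₁ ^ 2 * η₂ ^ 2 * α + 2 * η₂ ^ 2 := by
  have s2 : Real.sqrt 2 ^ 2 = 2 := Real.sq_sqrt (by norm_num)
  have s2pos : (0:ℝ) < Real.sqrt 2 := Real.sqrt_pos.mpr (by norm_num)
  have s22 : Real.sqrt 22 ^ 2 = 22 := Real.sq_sqrt (by norm_num)
  have s22pos : (0:ℝ) < Real.sqrt 22 := Real.sqrt_pos.mpr (by norm_num)
  have hkη : 0 < k * η₁ := mul_pos hk hη₁
  have hden : (0:ℝ) < 3 * k ^ 2 * η₁ ^ 2 := by positivity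
  have hmin1 : min 1 (3 / 2 + k * η₁ * χ) ≤ 1 := min_le_left _ _
  have hmin2 : min 1 (3 / 2 + k * η₁ * χ) ≤ 3 / 2 + k * η₁ * χ := min_le_right _ _
  have hsmall1 : k ^ 2 * η₁ * η₂ < 2 * Real.sqrt 2 / 3 := by
    calc k ^ 2 * η₁ * η₂ < (2 * Real.sqrt 2 / 3) * min 1 (3 / 2 + k * η₁ * χ) := hsmall
    _ ≤ (2 * Real.sqrt 2 / 3) * 1 := by
        apply mul_le_mul_of_nonneg_left hmin1 (by positivity)
    _ = 2 * Real.sqrt 2 / 3 := by ring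
  have hχm0 : 0 ≤ χm := by rw [hχm]; exact le_max_right _ _
  have hχm1 : -χ ≤ χm := by rw [hχm]; exact le_max_left _ _
  -- M < B
  have hB1 : χ ^ 2 / 2 < (3 - 2 * k * η₁ * χm) / (3 * k ^ 2 * η₁ ^ 2) := by
    rw [div_lt_div_iff₀ (by norm_num) hden]
    rcases le_or_gt 0 χ with hχ | hχ
    · have hm : χm = 0 := by rw [hχm]; simp [neg_nonpos.mpr hχ]
      rw [hm]
      have ht0 : 0 ≤ k * η₁ * χ := mul_nonneg hkη.le hχ
      have ht2 : (k * η₁ * χ) ^ 2 < 2 := by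
        nlinarith [mul_lt_mul_of_pos_right hup s2pos, mul_le_mul_of_nonneg_right hup.le ht0]
      nlinarith [ht2]
    · have hm : χm = -χ := by rw [hχm]; exact max_eq_left (by linarith)
      rw [hm]
      have ht0 : k * η₁ * χ < 0 := mul_neg_of_pos_of_neg hkη hχ
      have f1 : 0 < Real.sqrt 22 + (3 * (k * η₁ * χ) - 2) := by nlinarith [hlow]
      have f2 : 0 < Real.sqrt 22 - (3 * (k * η₁ * χ) - 2) := by nlinarith
      have key : 3 * (k * η₁ * χ) ^ 2 - 4 * (k * η₁ * χ) < 6 := by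
        nlinarith [mul_pos f1 f2, s22]
      nlinarith [key]
  have hB2 : η₂ / (Real.sqrt 2 * η₁) < (3 - 2 * k * η₁ * χm) / (3 * k ^ 2 * η₁ ^ 2) := by
    rw [div_lt_div_iff₀ (mul_pos s2pos hη₁) hden]
    rcases le_or_gt 0 χ with hχ | hχ
    · have hm : χm = 0 := by rw [hχm]; simp [neg_nonpos.mpr hχ]
      rw [hm]
      nlinarith [mul_lt_mul_of_pos_right hsmall1 hη₁, s2pos, hη₁]
    · have hm : χm = -χ := by rw [hχm]; exact max_eq_left (by linarith)
      rw [hm]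
      have hs2 : k ^ 2 * η₁ * η₂ < 2 * Real.sqrt 2 / 3 * (3 / 2 + k * η₁ * χ) :=
        lt_of_lt_of_le hsmall (mul_le_mul_of_nonneg_left hmin2 (by positivity))
      have h3 := mul_lt_mul_of_pos_right hs2 hη₁
      nlinarith [h3, s2pos, hη₁]
  have hMB : max (χ ^ 2 / 2) (η₂ / (Real.sqrt 2 * η₁))
      < (3 - 2 * k * η₁ * χm) / (3 * k ^ 2 * η₁ ^ 2) := max_lt hB1 hB2
  -- first conclusion
  have hMα : max (χ ^ 2 / 2) (η₂ / (Real.sqrt 2 * η₁)) < α := by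
    rw [hα]; linarith
  have hαB : α < (3 - 2 * k * η₁ * χm) / (3 * k ^ 2 * η₁ ^ 2) := by
    rw [hα]; linarith
  refine ⟨hMα, ?_, ?_, ?_⟩
  · refine lt_of_lt_of_le hαB ?_
    rw [div_le_div_iff₀ hden hden]
    nlinarith [mul_le_mul_of_nonneg_left hχm1 hkη.le, hden]
  · refine lt_of_lt_of_le hαB ?_
    rw [div_le_div_iff₀ hden (by positivity : (0:ℝ) < k ^ 2 * η₁ ^ 2)]
    nlinarith [mul_nonneg (mul_nonneg hkη.le hχm0) (mul_pos (mul_pos hk hk) (mul_pos hη₁ hη₁)).le]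
  · have h8 : k ^ 4 * η₁ ^ 2 * η₂ ^ 2 < 8 / 9 := by
      nlinarith [hsmall1, s2, mul_pos (mul_pos (pow_pos hk 2) hη₁) hη₂, s2pos]
    have h8' := mul_lt_mul_of_pos_right h8 (pow_pos hη₂ 2)
    nlinarith [sq_nonneg (η₁ * α - 3 * k ^ 2 * η₁ * η₂ ^ 2 / 2), h8', pow_pos hη₂ 2]
end

section
/- Let k, η₁, η₂ > 0 and χ ∈ ℝ satisfy (2 − √22)/3 < kη₁χ < √2 and k²η₁η₂ < (2√2/3)·min{1, 3/2 + kη₁χ}. Then there exist α, β, γ₁, γ₂ > 0 such that: (1 + β)η₂² < 2α/k²; (1 − 2β)α + (γ₁α − χ)² < 2γ₁α/(kη₁); 2(1 + β)αη₁² + χ²/(k²α) < 4/k²; and 1 − 2β + γ₂²/α < 2γ₂/(kη₂). -/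
set_option maxHeartbeats 1000000 in
/-- Algebraic core (4.33)–(4.35) of Lemma 4.3: under the smallness conditions (4.32), the
Lyapunov-functional parameters `α, β, γ₁, γ₂` can be chosen positive so that the four
coefficients `A₁, A₂, A₃, A₄` in the dissipation inequality are all positive. -/
theorem stmt6 (k η₁ η₂ χ : ℝ)
    (hk : 0 < k) (hη₁ : 0 < η₁) (hη₂ : 0 < η₂)
    (hlow : (2 - Real.sqrt 22) / 3 < k * η₁ * χ)
    (hup : k * η₁ * χ < Real.sqrt 2)
    (hsmall : k ^ 2 * η₁ * η₂ < (2 * Real.sqrt 2 / 3) * min 1 (3 / 2 + k * η₁ * χ)) :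
    ∃ α β γ₁ γ₂ : ℝ, 0 < α ∧ 0 < β ∧ 0 < γ₁ ∧ 0 < γ₂ ∧
      (1 + β) * η₂ ^ 2 < 2 * α / k ^ 2 ∧
      (1 - 2 * β) * α + (γ₁ * α - χ) ^ 2 < 2 * γ₁ * α / (k * η₁) ∧
      2 * (1 + β) * α * η₁ ^ 2 + χ ^ 2 / (k ^ 2 * α) < 4 / k ^ 2 ∧
      1 - 2 * β + γ₂ ^ 2 / α < 2 * γ₂ / (k * η₂) := by
  set t : ℝ := k * η₁ * χ with ht
  set s : ℝ := k ^ 2 * η₁ * η₂ with hsdef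
  have hs0 : 0 < s := by positivity
  have h2pos : (0:ℝ) < Real.sqrt 2 := by positivity
  have hsq2 : Real.sqrt 2 ^ 2 = 2 := Real.sq_sqrt (by norm_num)
  have hsq22 : Real.sqrt 22 ^ 2 = 22 := Real.sq_sqrt (by norm_num)
  have h22pos : (0:ℝ) < Real.sqrt 22 := by positivity
  have h22lt5 : Real.sqrt 22 < 5 := by nlinarith [hsq22, h22pos]
  have htm1 : -1 < t := by
    have : (2 - (5:ℝ)) / 3 < (2 - Real.sqrt 22) / 3 := by linarith
    linarith
  have ht2 : t ^ 2 < 2 := by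
    rcases le_or_gt 0 t with h | h
    · nlinarith [hup, hsq2]
    · nlinarith [htm1]
  have hmin1 : min 1 (3 / 2 + t) ≤ 1 := min_le_left _ _
  have hmin2 : min 1 (3 / 2 + t) ≤ 3 / 2 + t := min_le_right _ _
  have hs1 : s < 2 * Real.sqrt 2 / 3 := by
    calc s < 2 * Real.sqrt 2 / 3 * min 1 (3 / 2 + t) := hsmall
    _ ≤ 2 * Real.sqrt 2 / 3 * 1 :=
        mul_le_mul_of_nonneg_left hmin1 (by positivity)
    _ = 2 * Real.sqrt 2 / 3 := by ring
  have hs89 : s ^ 2 < 8 / 9 := by nlinarith [hsq2, hs0, h2pos]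
  set c : ℝ := 1 + 2 / 3 * min t 0 with hc
  have hc0 : 1 / 3 < c := by
    have : -1 < min t 0 := lt_min htm1 (by norm_num)
    rw [hc]; linarith
  have hc1 : c ≤ 1 := by
    have : min t 0 ≤ 0 := min_le_right _ _
    rw [hc]; linarith
  have hcle : c ≤ 1 + 2 / 3 * t := by
    have : min t 0 ≤ t := min_le_left _ _
    rw [hc]; linarith
  have hm1 : t ^ 2 / 2 < c := by
    rcases le_or_gt 0 t with h | h
    · have hmt : min t 0 = 0 := min_eq_right h
      rw [hc, hmt]; nlinarith
    · have hmt : min t 0 = t := min_eq_left h.le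
      have h23 : 0 < 2 - 3 * t := by linarith
      have : (2 - 3 * t) ^ 2 < 22 := by nlinarith [hlow, hsq22, h22pos]
      rw [hc, hmt]; nlinarith
  have hm2 : s / Real.sqrt 2 < c := by
    rw [div_lt_iff₀ h2pos]
    rcases le_or_gt 0 t with h | h
    · have hmt : min t 0 = 0 := min_eq_right h
      rw [hc, hmt]
      have : c * Real.sqrt 2 = Real.sqrt 2 := by rw [hc, hmt]; ring
      linarith [hs1, h2pos]
    · have hmt : min t 0 = t := min_eq_left h.le
      have hs2 : s < 2 * Real.sqrt 2 / 3 * (3 / 2 + t) := by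
        calc s < 2 * Real.sqrt 2 / 3 * min 1 (3 / 2 + t) := hsmall
        _ ≤ 2 * Real.sqrt 2 / 3 * (3 / 2 + t) :=
            mul_le_mul_of_nonneg_left hmin2 (by positivity)
      have heq : 2 * Real.sqrt 2 / 3 * (3 / 2 + t) = (1 + 2 / 3 * t) * Real.sqrt 2 := by ring
      rw [hc, hmt]
      linarith [heq ▸ hs2]
  set m : ℝ := max (t ^ 2 / 2) (s / Real.sqrt 2) with hm
  have hm0 : 0 ≤ m := le_trans (by positivity) (le_max_left _ _)
  have hmc : m < c := max_lt hm1 hm2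
  have hmt2 : t ^ 2 / 2 ≤ m := le_max_left _ _
  have hms : s / Real.sqrt 2 ≤ m := le_max_right _ _
  have hsm : s ≤ Real.sqrt 2 * m := by
    rw [div_le_iff₀ h2pos] at hms; linarith
  set a : ℝ := (m + c) / 2 with ha
  clear_value t s c m a
  have ha0 : 0 < a := by rw [ha]; linarith
  have ha1 : a < 1 := by rw [ha]; linarith
  have hac : a < c := by rw [ha]; linarith
  have hma : m < a := by rw [ha]; linarith
  have ha2 : a < 1 + 2 / 3 * t := lt_of_lt_of_le hac hcle
  have hta : t ^ 2 < 2 * a := by nlinarith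
  have hsa : s ^ 2 < 2 * a ^ 2 := by
    have h1 : s < Real.sqrt 2 * a := lt_of_le_of_lt hsm (by nlinarith)
    nlinarith [hsq2, hs0, h2pos]
  have hiv : (3 * a - 2) * s ^ 2 < a ^ 2 := by
    rcases le_or_gt (3 * a - 2) 0 with h | h
    · nlinarith [sq_nonneg s, ha0]
    · have h1 : (3 * a - 2) * s ^ 2 < (3 * a - 2) * (8 / 9) :=
        mul_lt_mul_of_pos_left hs89 h
      have h2 : (3 * a - 2) * (8 / 9) ≤ a ^ 2 := by linarith [sq_nonneg (3 * a - 4)]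
      linarith
  refine ⟨a / (k ^ 2 * η₁ ^ 2), (1 - a) / a, (t + 1) * k * η₁ / a,
    a / (k ^ 3 * η₁ ^ 2 * η₂), by positivity, div_pos (by linarith) ha0,
    by have : 0 < t + 1 := by linarith
       positivity,
    by positivity, ?_, ?_, ?_, ?_⟩
  · -- (1+β) η₂² < 2α/k²  ⟺ s² < 2a²
    have e1 : 1 + (1 - a) / a = 1 / a := by field_simp; ring
    have e2 : 2 * (a / (k ^ 2 * η₁ ^ 2)) / k ^ 2 = 2 * a / (k ^ 4 * η₁ ^ 2) := by
      field_simp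
    rw [e1, e2, one_div, inv_mul_eq_div, div_lt_div_iff₀ ha0 (by positivity)]
    have hseq : η₂ ^ 2 * (k ^ 4 * η₁ ^ 2) = s ^ 2 := by rw [hsdef]; ring
    have h2a : 2 * a ^ 2 = 2 * a * a := by ring
    linarith [hsa]
  · -- A₂ : reduces to 3a - 1 < 2t + 2
    have e1 : (t + 1) * k * η₁ / a * (a / (k ^ 2 * η₁ ^ 2)) - χ = 1 / (k * η₁) := by
      rw [ht]; field_simp; ring
    rw [e1]
    have e2 : (1 - 2 * ((1 - a) / a)) * (a / (k ^ 2 * η₁ ^ 2))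
        = (3 * a - 2) / (k ^ 2 * η₁ ^ 2) := by field_simp; ring
    have e3 : 2 * ((t + 1) * k * η₁ / a) * (a / (k ^ 2 * η₁ ^ 2)) / (k * η₁)
        = (2 * t + 2) / (k ^ 2 * η₁ ^ 2) := by field_simp
    have e4 : (1 / (k * η₁)) ^ 2 = 1 / (k ^ 2 * η₁ ^ 2) := by
      field_simp
    rw [e2, e3, e4, ← add_div, div_lt_div_iff₀ (by positivity) (by positivity)]
    exact mul_lt_mul_of_pos_right (by linarith) (by positivity)
  · -- A₃ : reduces to t² < 2a
    have e1 : 2 * (1 + (1 - a) / a) * (a / (k ^ 2 * η₁ ^ 2)) * η₁ ^ 2 = 2 / k ^ 2 := by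
      field_simp; ring
    have e2 : χ ^ 2 / (k ^ 2 * (a / (k ^ 2 * η₁ ^ 2))) = t ^ 2 / (k ^ 2 * a) := by
      rw [ht]; field_simp
    rw [e1, e2, div_add_div _ _ (by positivity) (by positivity),
      div_lt_div_iff₀ (by positivity) (by positivity)]
    have h := mul_lt_mul_of_pos_left hta (show (0:ℝ) < k ^ 4 by positivity)
    linarith [h]
  · -- A₄ : reduces to (3a-2) s² < a²
    have e1 : (a / (k ^ 3 * η₁ ^ 2 * η₂)) ^ 2 / (a / (k ^ 2 * η₁ ^ 2)) = a / s ^ 2 := by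
      rw [hsdef]; field_simp
    have e2 : 2 * (a / (k ^ 3 * η₁ ^ 2 * η₂)) / (k * η₂) = 2 * a / s ^ 2 := by
      rw [hsdef]; field_simp
    have e3 : 1 - 2 * ((1 - a) / a) = (3 * a - 2) / a := by field_simp; ring
    rw [e1, e2, e3, div_add_div _ _ (ne_of_gt ha0) (by positivity),
      div_lt_div_iff₀ (by positivity) (by positivity)]
    have h := mul_lt_mul_of_pos_right hiv (show (0:ℝ) < s ^ 2 by positivity)
    linarith [h]
end
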